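/- Let H ∈ (0,1/2) with H ≠ 1/4, β ∈ (0,1], and let φ̂_n(t) = (t + n^{-β})^{H-1/2} for t ≥ n^{-β}, with 0 ≤ φ̂_n(t) ≤ (1+c₁)^{1/2}(t+n^{-β})^{H-1/2} everywhere. Then (1/n) ∫_0^T φ̂_n(T-s)^4 ds ≤ C max(n^{-1+β-4Hβ}, n^{-1}) for a constant C not depending on n. -/
import Mathlib


open MeasureTheory Set Filter

set_option maxHeartbeats 1000000 in
/-- for `H ∈ (0,1/2)`, `H ≠ 1/4`, `β ∈ (0,1]`, and a kernel `φ̂_n` with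
`φ̂_n(t) = (t+n^{-β})^{H-1/2}` for `t ≥ n^{-β}` and
`0 ≤ φ̂_n(t) ≤ (1+c₁)^{1/2}(t+n^{-β})^{H-1/2}` everywhere,
`(1/n)∫_0^T φ̂_n(T-s)⁴ ds ≤ C max(n^{-1+β-4Hβ}, n^{-1})` with `C` not depending on `n`. -/
theorem statement6 (H β T : ℝ) (hH : H ∈ Set.Ioo (0:ℝ) (1/2)) (hH4 : H ≠ 1/4)
    (hβ : β ∈ Set.Ioc (0:ℝ) 1) (hT : 0 < T)
    (φ : ℕ → ℝ → ℝ)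
    (heq : ∀ n : ℕ, 1 ≤ n → ∀ t : ℝ, (n:ℝ) ^ (-β) ≤ t →
      φ n t = (t + (n:ℝ) ^ (-β)) ^ (H - 1/2))
    (hpos : ∀ (n : ℕ) (t : ℝ), 0 ≤ t → 0 ≤ φ n t)
    (hbd : ∀ n : ℕ, 1 ≤ n → ∀ t : ℝ, 0 ≤ t →
      φ n t ≤ Real.sqrt (1 + ((2:ℝ) ^ (2*H) - 1 - (2:ℝ) ^ (2*H) * H)⁻¹)
        * (t + (n:ℝ) ^ (-β)) ^ (H - 1/2)) :
    ∃ C : ℝ, 0 < C ∧ ∀ n : ℕ, 1 ≤ n →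
      (1/(n:ℝ)) * (∫ s in (0:ℝ)..T, (φ n (T - s))^4)
        ≤ C * max ((n:ℝ) ^ (-1 + β - 4*H*β)) ((n:ℝ) ^ (-1 : ℝ)) := by
  obtain ⟨hH0, hH2⟩ := hH
  obtain ⟨hβ0, hβ1⟩ := hβ
  set K : ℝ := Real.sqrt (1 + ((2:ℝ) ^ (2*H) - 1 - (2:ℝ) ^ (2*H) * H)⁻¹) with hKdef
  clear_value K
  have hK0 : 0 ≤ K := by rw [hKdef]; exact Real.sqrt_nonneg _
  set q : ℝ := 4*H - 1 with hqdef
  clear_value q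
  have hq0 : q ≠ 0 := by
    intro h; apply hH4; rw [hqdef] at h; linarith
  have hTq : 0 < (T+1) ^ q := Real.rpow_pos_of_pos (by linarith) q
  have hK4 : 0 ≤ K^4 := by positivity
  refine ⟨1 + K^4 * (((T+1) ^ q + 1) / |q|), by positivity, ?_⟩
  have hC0 : 0 ≤ K^4 * (((T+1) ^ q + 1) / |q|) := by
    have : 0 < |q| := abs_pos.mpr hq0
    positivity
  intro n hn
  have hn1 : (1:ℝ) ≤ (n:ℝ) := by exact_mod_cast hn
  have hn0 : (0:ℝ) < (n:ℝ) := by linarith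
  set a : ℝ := (n:ℝ) ^ (-β) with hadef
  clear_value a
  have ha0 : 0 < a := by rw [hadef]; exact Real.rpow_pos_of_pos hn0 _
  have ha1 : a ≤ 1 := by
    rw [hadef]; exact Real.rpow_le_one_of_one_le_of_nonpos hn1 (by linarith)
  have hmaxpos : 0 < max ((n:ℝ) ^ (-1 + β - 4*H*β)) ((n:ℝ) ^ (-1 : ℝ)) :=
    lt_max_of_lt_right (Real.rpow_pos_of_pos hn0 _)
  have h1n : (1/(n:ℝ)) = (n:ℝ) ^ (-1:ℝ) := by rw [Real.rpow_neg_one]; simp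
  by_cases hint : IntervalIntegrable (fun s => (φ n (T - s))^4) volume 0 T
  · -- pointwise bound
    have hbound : ∀ s ∈ Set.Icc (0:ℝ) T,
        (φ n (T - s))^4 ≤ K^4 * (T - s + a) ^ (4*H - 2) := by
      intro s hs
      have hts : 0 ≤ T - s := by linarith [hs.2]
      have hx0 : 0 < T - s + a := by linarith
      have h1 : (φ n (T - s))^4 ≤ (K * (T - s + a) ^ (H - 1/2))^4 := by
        rw [hadef]
        exact pow_le_pow_left₀ (hpos n _ hts) (hbd n hn _ hts) 4
      have hxp : ((T - s + a) ^ (H - 1/2))^(4:ℕ) = (T - s + a) ^ (4*H - 2) := by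
        rw [← Real.rpow_natCast ((T - s + a) ^ (H - 1/2)) 4,
          ← Real.rpow_mul hx0.le]
        congr 1
        push_cast
        ring
      calc (φ n (T - s))^4 ≤ (K * (T - s + a) ^ (H - 1/2))^4 := h1
        _ = K^4 * ((T - s + a) ^ (H - 1/2))^4 := by ring
        _ = K^4 * (T - s + a) ^ (4*H - 2) := by rw [hxp]
    have hg_cont : ContinuousOn (fun s : ℝ => K^4 * (T - s + a) ^ (4*H - 2))
        (Set.uIcc 0 T) := by
      apply ContinuousOn.mul continuousOn_const
      apply ContinuousOn.rpow_const
      · fun_prop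
      · intro x hx
        left
        rw [Set.uIcc_of_le hT.le] at hx
        have := hx.2
        intro h; nlinarith
    have hg_int : IntervalIntegrable (fun s : ℝ => K^4 * (T - s + a) ^ (4*H - 2))
        volume 0 T := hg_cont.intervalIntegrable
    have hmono := intervalIntegral.integral_mono_on hT.le hint hg_int hbound
    have hIval : (∫ s in (0:ℝ)..T, (T - s + a) ^ (4*H - 2))
        = ((T + a) ^ q - a ^ q) / q := by
      have h1 : (∫ s in (0:ℝ)..T, (T - s + a) ^ (4*H - 2))
          = ∫ s in (0:ℝ)..T, ((T + a) - s) ^ (4*H - 2) := by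
        congr 1; funext s; ring_nf
      rw [h1, intervalIntegral.integral_comp_sub_left (fun x : ℝ => x ^ (4*H-2)) (T+a)]
      have h2 : T + a - T = a := by ring
      have h3 : T + a - 0 = T + a := by ring
      rw [h2, h3, integral_rpow (Or.inr ⟨by intro h; apply hq0; rw [hqdef]; linarith,
        notMem_uIcc_of_lt ha0 (by linarith)⟩)]
      have he : 4*H - 2 + 1 = q := by rw [hqdef]; ring
      rw [he]
    have hInt2 : (∫ s in (0:ℝ)..T, K^4 * (T - s + a) ^ (4*H - 2))
        = K^4 * (((T + a) ^ q - a ^ q) / q) := by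
      rw [intervalIntegral.integral_const_mul, hIval]
    rw [hInt2] at hmono
    have hstep : (1/(n:ℝ)) * (∫ s in (0:ℝ)..T, (φ n (T - s))^4)
        ≤ (1/(n:ℝ)) * (K^4 * (((T + a) ^ q - a ^ q) / q)) :=
      mul_le_mul_of_nonneg_left hmono (by positivity)
    have haq_pos : 0 < a ^ q := Real.rpow_pos_of_pos ha0 q
    rcases lt_or_gt_of_ne hq0 with hqneg | hqpos
    · -- q < 0
      have habs : |q| = -q := abs_of_neg hqneg
      have hTa : 0 < (T + a) ^ q := Real.rpow_pos_of_pos (by linarith) q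
      have hI : ((T + a) ^ q - a ^ q) / q ≤ a ^ q / (-q) := by
        have hrw : ((T + a) ^ q - a ^ q) / q = (a ^ q - (T + a) ^ q) / (-q) := by
          rw [div_neg]; ring
        rw [hrw]
        have hnq : (0:ℝ) < -q := by linarith
        gcongr
        linarith
      have haq : a ^ q = (n:ℝ) ^ (β - 4*H*β) := by
        rw [hadef, ← Real.rpow_mul hn0.le, hqdef]; ring_nf
      have hKC : K^4 / (-q) ≤ 1 + K^4 * (((T+1) ^ q + 1) / |q|) := by
        rw [habs]
        have h1 : K^4 * 1 ≤ K^4 * ((T+1)^q + 1) :=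
          mul_le_mul_of_nonneg_left (by linarith) hK4
        have h2 : K^4 / (-q) ≤ (K^4 * ((T+1)^q + 1)) / (-q) := by
          have hnq : (0:ℝ) < -q := by linarith
          gcongr
          nlinarith
        have h3 : K^4 * (((T+1)^q + 1) / (-q)) = (K^4 * ((T+1)^q + 1)) / (-q) := by
          ring
        rw [h3]
        have : 0 ≤ (K^4 * ((T+1)^q + 1)) / (-q) :=
          div_nonneg (by nlinarith) (by linarith)
        linarith [h2]
      calc (1/(n:ℝ)) * (∫ s in (0:ℝ)..T, (φ n (T - s))^4)
          ≤ (1/(n:ℝ)) * (K^4 * (((T + a) ^ q - a ^ q) / q)) := hstep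
        _ ≤ (1/(n:ℝ)) * (K^4 * (a ^ q / (-q))) := by
            apply mul_le_mul_of_nonneg_left _ (by positivity)
            exact mul_le_mul_of_nonneg_left hI hK4
        _ = (K^4 / (-q)) * ((n:ℝ) ^ (-1:ℝ) * (n:ℝ) ^ (β - 4*H*β)) := by
            rw [haq, h1n]; ring
        _ = (K^4 / (-q)) * (n:ℝ) ^ (-1 + β - 4*H*β) := by
            rw [← Real.rpow_add hn0]; ring_nf
        _ ≤ (1 + K^4 * (((T+1) ^ q + 1) / |q|)) * (n:ℝ) ^ (-1 + β - 4*H*β) :=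
            mul_le_mul_of_nonneg_right hKC (Real.rpow_pos_of_pos hn0 _).le
        _ ≤ (1 + K^4 * (((T+1) ^ q + 1) / |q|)) *
              max ((n:ℝ) ^ (-1 + β - 4*H*β)) ((n:ℝ) ^ (-1:ℝ)) :=
            mul_le_mul_of_nonneg_left (le_max_left _ _) (by linarith)
    · -- q > 0
      have habs : |q| = q := abs_of_pos hqpos
      have hTa_le : (T + a) ^ q ≤ (T + 1) ^ q :=
        Real.rpow_le_rpow (by linarith) (by linarith) hqpos.le
      have hI : ((T + a) ^ q - a ^ q) / q ≤ (T+1) ^ q / q := by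
        gcongr
        linarith
      have hKC : K^4 * ((T+1)^q / q) ≤ 1 + K^4 * (((T+1) ^ q + 1) / |q|) := by
        rw [habs]
        have h1 : K^4 * ((T+1)^q / q) ≤ K^4 * (((T+1)^q + 1) / q) := by
          apply mul_le_mul_of_nonneg_left _ hK4
          gcongr
          linarith
        linarith
      calc (1/(n:ℝ)) * (∫ s in (0:ℝ)..T, (φ n (T - s))^4)
          ≤ (1/(n:ℝ)) * (K^4 * (((T + a) ^ q - a ^ q) / q)) := hstep
        _ ≤ (1/(n:ℝ)) * (K^4 * ((T+1) ^ q / q)) := by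
            apply mul_le_mul_of_nonneg_left _ (by positivity)
            exact mul_le_mul_of_nonneg_left hI hK4
        _ ≤ (1 + K^4 * (((T+1) ^ q + 1) / |q|)) * ((n:ℝ) ^ (-1:ℝ)) := by
            rw [h1n, mul_comm]
            exact mul_le_mul_of_nonneg_right hKC (Real.rpow_pos_of_pos hn0 _).le
        _ ≤ (1 + K^4 * (((T+1) ^ q + 1) / |q|)) *
              max ((n:ℝ) ^ (-1 + β - 4*H*β)) ((n:ℝ) ^ (-1:ℝ)) :=
            mul_le_mul_of_nonneg_left (le_max_right _ _) (by linarith)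
  · rw [intervalIntegral.integral_undef hint, mul_zero]
    positivity
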